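/- arXiv:1310.1626 — 2 statements merged into one kernel-verified Lean document; each statement's English description precedes it below -/
import Mathlib

section
/- Let M be the real 2×2 matrix [[-2λc + 2cα/κ², 2c(λc+1)/(ακ²) - 2c²/κ⁴], [2/ε, -2(μ(1-ε)-1) - 2c/(εακ²)]] with all parameters positive, and suppose ε, α are chosen as ε = 2b/κ², α = λκ²/2 with b = (c/(2μλ))^{1/2}. If μ > 1 + γ/κ² + γ²/κ⁴, where γ = (λc+2)(2/(cλ³))^{1/2}, then trace(M) < 0 and det(M) > 0, hence both eigenvalues of M have negative real part. -/
open Matrix Polynomial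

lemma charpoly_fin_two' (N : Matrix (Fin 2) (Fin 2) ℂ) :
    N.charpoly = X ^ 2 - C N.trace * X + C N.det := by
  rw [Matrix.charpoly, Matrix.det_fin_two]
  rw [Matrix.charmatrix_apply_eq, Matrix.charmatrix_apply_eq,
    Matrix.charmatrix_apply_ne _ _ _ (by decide), Matrix.charmatrix_apply_ne _ _ _ (by decide),
    Matrix.trace_fin_two, Matrix.det_fin_two]
  simp only [map_add, _root_.map_mul, map_sub]
  ring

lemma key_ineq (g t : ℝ) (hg : 0 < g) (h : g + g ^ 2 < t) : g ^ 2 * (t + 1) < t ^ 2 := by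
  nlinarith [mul_pos hg (sub_pos.2 h), pow_pos hg 3]

lemma root_neg_re (T D : ℝ) (hT : T < 0) (hD : 0 < D) (z : ℂ)
    (h : z ^ 2 - (T : ℂ) * z + (D : ℂ) = 0) : z.re < 0 := by
  set x := z.re; set y := z.im
  have h1 : x ^ 2 - y ^ 2 - T * x + D = 0 := by
    have := congrArg Complex.re h
    simpa [pow_two, Complex.mul_re, Complex.mul_im, x, y] using this
  have h2 : y * (2 * x - T) = 0 := by
    have := congrArg Complex.im h
    simp [pow_two, Complex.mul_re, Complex.mul_im, x, y] at this
    ring_nf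
    ring_nf at this
    linarith
  rcases mul_eq_zero.1 h2 with hy | hx
  · rw [hy] at h1
    by_contra hx0
    push_neg at hx0
    nlinarith [sq_nonneg x, mul_nonneg (neg_nonneg.2 hT.le) hx0]
  · linarith

set_option maxHeartbeats 1000000 in
/-- With the choices `ε = 2b/κ²`, `α = λκ²/2`, `b = (c/(2μλ))^{1/2}`, if
`μ > 1 + γ/κ² + γ²/κ⁴` with `γ = (λc+2)(2/(cλ³))^{1/2}`, then the coefficient matrix `M`
has negative trace and positive determinant, hence both its eigenvalues have negative
real part. -/
theorem coefficient_matrix_stable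
    (lam c kap mu : ℝ) (hlam : 0 < lam) (hc : 0 < c) (hkap : 0 < kap) (hmu : 0 < mu)
    (b ε α γ : ℝ)
    (hb : b = Real.sqrt (c / (2 * mu * lam)))
    (hε : ε = 2 * b / kap ^ 2)
    (hα : α = lam * kap ^ 2 / 2)
    (hγ : γ = (lam * c + 2) * Real.sqrt (2 / (c * lam ^ 3)))
    (hcrit : mu > 1 + γ / kap ^ 2 + γ ^ 2 / kap ^ 4) :
    let M : Matrix (Fin 2) (Fin 2) ℝ :=
      !![-2 * lam * c + 2 * c * α / kap ^ 2,
         2 * c * (lam * c + 1) / (α * kap ^ 2) - 2 * c ^ 2 / kap ^ 4;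
         2 / ε,
         -2 * (mu * (1 - ε) - 1) - 2 * c / (ε * α * kap ^ 2)]
    M.trace < 0 ∧ 0 < M.det ∧
      ∀ z : ℂ, ((M.map (Complex.ofReal)).charpoly.IsRoot z) → z.re < 0 := by
  intro M
  have hk2 : (0:ℝ) < kap ^ 2 := by positivity
  have hbpos : 0 < b := by
    rw [hb]; exact Real.sqrt_pos.2 (by positivity)
  have hb2 : b ^ 2 = c / (2 * mu * lam) := by
    rw [hb, Real.sq_sqrt (by positivity)]
  have hcb : c = 2 * mu * lam * b ^ 2 := by
    field_simp at hb2; linarith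
  have hγpos : 0 < γ := by
    rw [hγ]
    have : (0:ℝ) < 2 / (c * lam ^ 3) := by positivity
    positivity
  have hmu1 : 1 < mu := by
    have h1 : 0 < γ / kap ^ 2 := by positivity
    have h2 : (0:ℝ) ≤ γ ^ 2 / kap ^ 4 := by positivity
    linarith
  set s := Real.sqrt mu with hs
  have hspos : 0 < s := Real.sqrt_pos.2 hmu
  have hs2 : s ^ 2 = mu := Real.sq_sqrt hmu.le
  -- key product identity
  have hsqrt : Real.sqrt (2 / (c * lam ^ 3)) * Real.sqrt mu * Real.sqrt (c / (2 * mu * lam))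
      = 1 / lam ^ 2 := by
    rw [← Real.sqrt_mul (by positivity : (0:ℝ) ≤ 2 / (c * lam ^ 3)),
        ← Real.sqrt_mul (by positivity : (0:ℝ) ≤ 2 / (c * lam ^ 3) * mu)]
    have h : 2 / (c * lam ^ 3) * mu * (c / (2 * mu * lam)) = (1 / lam ^ 2) ^ 2 := by
      field_simp
    rw [h, Real.sqrt_sq (by positivity)]
  have hkey : lam * c + 2 = γ * s * b * lam ^ 2 := by
    have h12 : γ * s * b * lam ^ 2
        = (lam * c + 2) * (Real.sqrt (2 / (c * lam ^ 3)) * Real.sqrt mu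
            * Real.sqrt (c / (2 * mu * lam))) * lam ^ 2 := by
      rw [hγ, hb, hs]; ring
    rw [h12, hsqrt]
    field_simp
  -- entrywise simplifications
  have e11 : -2 * lam * c + 2 * c * α / kap ^ 2 = -(lam * c) := by
    rw [hα]; field_simp; ring
  have e12 : 2 * c * (lam * c + 1) / (α * kap ^ 2) - 2 * c ^ 2 / kap ^ 4
      = 2 * c * (lam * c + 2) / (lam * kap ^ 4) := by
    rw [hα]; field_simp; ring
  have e21 : 2 / ε = kap ^ 2 / b := by
    rw [hε]; field_simp
  have e22 : -2 * (mu * (1 - ε) - 1) - 2 * c / (ε * α * kap ^ 2) = -2 * (mu - 1) := by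
    rw [hε, hα, hcb]; field_simp; ring
  have htr : M.trace = -(lam * c) - 2 * (mu - 1) := by
    show Matrix.trace !![_,_;_,_] = _
    rw [Matrix.trace_fin_two_of, e11, e22]; ring
  have hdet : M.det = 2 * lam * c * ((mu - 1) - γ * s / kap ^ 2) := by
    show Matrix.det !![_,_;_,_] = _
    rw [Matrix.det_fin_two_of, e11, e22, e12, e21, hkey]
    field_simp
  -- key inequality
  have hineq : γ * s / kap ^ 2 < mu - 1 := by
    set g := γ / kap ^ 2 with hg
    have hgpos : 0 < g := by positivity
    have hcrit' : g + g ^ 2 < mu - 1 := by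
      have h : γ ^ 2 / kap ^ 4 = g ^ 2 := by rw [hg]; field_simp
      linarith [hcrit, h.ge, h.le]
    have hsq : (g * s) ^ 2 < (mu - 1) ^ 2 := by
      have h1 : (g * s) ^ 2 = g ^ 2 * mu := by rw [mul_pow, hs2]
      calc (g * s) ^ 2 = g ^ 2 * (mu - 1 + 1) := by rw [mul_pow, hs2]; ring
        _ < (mu - 1) ^ 2 := key_ineq g (mu - 1) hgpos hcrit'
    have hfin : g * s < mu - 1 :=
      lt_of_pow_lt_pow_left₀ 2 (by linarith : (0:ℝ) ≤ mu - 1) hsq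
    calc γ * s / kap ^ 2 = g * s := by rw [hg]; ring
      _ < mu - 1 := hfin
  have htrneg : M.trace < 0 := by
    rw [htr]
    have := mul_pos hlam hc
    linarith
  have hdetpos : 0 < M.det := by
    rw [hdet]
    have h : 0 < (mu - 1) - γ * s / kap ^ 2 := by linarith
    positivity
  refine ⟨htrneg, hdetpos, ?_⟩
  intro z hz
  have hmap_tr : (M.map Complex.ofReal).trace = (M.trace : ℂ) := by
    rw [Matrix.trace_fin_two, Matrix.trace_fin_two]
    simp [Matrix.map_apply]
  have hmap_det : (M.map Complex.ofReal).det = (M.det : ℂ) := by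
    rw [Matrix.det_fin_two, Matrix.det_fin_two]
    simp [Matrix.map_apply]
  have hz' : Polynomial.eval z ((M.map Complex.ofReal).charpoly) = 0 := hz
  rw [charpoly_fin_two', hmap_tr, hmap_det] at hz'
  simp only [eval_add, eval_sub, eval_pow, eval_mul, eval_C, eval_X] at hz'
  exact root_neg_re M.trace M.det htrneg hdetpos z hz'
end

section
/- Let B(t,x) = curl A(t,x) on ∂Ω for a solution of the TDGL system in the Coulomb gauge, and suppose the tangential derivative of curl A along ∂Ω equals J/κ² at each boundary point, with J time-independent and ∫_{∂Ω} J ds = 0, while the boundary average of curl A equals h_ex. Then B is independent of t and is given explicitly by B(x) = h_r - (1/κ²) · (average over x̃ ∈ ∂Ω of |Γ(x̃,x)| J_r(x̃)), where Γ(x̃,x) is the boundary arc from x̃ to x in the positive direction, J = hJ_r, h_ex = h·h_r. -/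
open MeasureTheory intervalIntegral

/-- Positively-oriented boundary arc length from `s'` to `s` on a boundary of total
length `L` (arc length parametrization modulo `L`). -/
noncomputable def arcLen (L s' s : ℝ) : ℝ := L * Int.fract ((s - s') / L)

/-- The boundary magnetic field is time-independent and explicitly determined:
if `∂B/∂τ = J_r/κ²` along the boundary (arc length `s`, total length `L`), with `J_r`
`L`-periodic of zero mean, and the boundary average of `B(t,·)` equals `h_r` for all `t`,
then `B` does not depend on `t` and
`B(t,s) = h_r - (1/κ²)·⨍ arcLen(s',s)·J_r(s') ds'`. -/
theorem boundary_field_time_independent_formula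
    (L kap hr : ℝ) (hL : 0 < L) (hkap : kap ≠ 0)
    (B : ℝ → ℝ → ℝ) (Jr : ℝ → ℝ)
    (hJcont : Continuous Jr) (hJper : ∀ s, Jr (s + L) = Jr s)
    (hJzero : (∫ s in (0:ℝ)..L, Jr s) = 0)
    (hBper : ∀ t s, B t (s + L) = B t s)
    (hBs : ∀ t s, HasDerivAt (B t) (Jr s / kap ^ 2) s)
    (hBavg : ∀ t, (1 / L) * ∫ s in (0:ℝ)..L, B t s = hr) :
    ∀ t t' s : ℝ,
      B t s = B t' s ∧
      B t s = hr - (1 / kap ^ 2) * ((1 / L) * ∫ s' in (0:ℝ)..L, arcLen L s' s * Jr s') := by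
  have hLne : L ≠ 0 := hL.ne'
  have hk2 : (kap:ℝ)^2 ≠ 0 := pow_ne_zero _ hkap
  set F : ℝ → ℝ := fun s => ∫ u in (0:ℝ)..s, Jr u with hFdef
  have hFderiv : ∀ s, HasDerivAt F (Jr s) s := fun s =>
    intervalIntegral.integral_hasDerivAt_right (hJcont.intervalIntegrable _ _)
      (hJcont.stronglyMeasurableAtFilter _ _) hJcont.continuousAt
  have hFcont : Continuous F := continuous_iff_continuousAt.2 fun s => (hFderiv s).continuousAt
  have hJP : Function.Periodic Jr L := hJper
  have hF0 : F 0 = 0 := intervalIntegral.integral_same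
  have hFL : F L = 0 := hJzero
  have hFper : Function.Periodic F L := by
    intro s
    have h1 : (∫ u in s..s + L, Jr u) = 0 := by
      rw [hJP.intervalIntegral_add_eq s 0]; simpa using hJzero
    have h2 : (∫ u in (0:ℝ)..s, Jr u) + (∫ u in s..s + L, Jr u) = ∫ u in (0:ℝ)..s + L, Jr u :=
      intervalIntegral.integral_add_adjacent_intervals
        (hJcont.intervalIntegrable 0 s) (hJcont.intervalIntegrable s (s + L))
    simp only [hFdef]
    rw [← h2, h1, add_zero]
  -- integration by parts: ∫ F = -∫ u·Jr
  have hIBP : (∫ u in (0:ℝ)..L, F u) = -∫ u in (0:ℝ)..L, u * Jr u := by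
    have hd : ∀ u ∈ Set.uIcc (0:ℝ) L, HasDerivAt (fun u => u * F u) (F u + u * Jr u) u := by
      intro u _
      have := (hasDerivAt_id u).fun_mul (hFderiv u)
      simpa [add_comm] using this
    have hi : IntervalIntegrable (fun u => F u + u * Jr u) volume 0 L :=
      (hFcont.add (continuous_id.mul hJcont)).intervalIntegrable _ _
    have h := intervalIntegral.integral_eq_sub_of_hasDerivAt hd hi
    have hadd : (∫ u in (0:ℝ)..L, (F u + u * Jr u))
        = (∫ u in (0:ℝ)..L, F u) + ∫ u in (0:ℝ)..L, u * Jr u :=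
      intervalIntegral.integral_add (hFcont.intervalIntegrable (0:ℝ) L)
        ((continuous_id.mul hJcont).intervalIntegrable (0:ℝ) L)
    rw [hadd] at h
    simp only [hFL, mul_zero, zero_mul, sub_zero] at h
    linarith
  -- key identity for s₀ ∈ [0, L)
  have key0 : ∀ s₀ : ℝ, 0 ≤ s₀ → s₀ < L →
      (∫ s' in (0:ℝ)..L, arcLen L s' s₀ * Jr s') = (∫ u in (0:ℝ)..L, F u) - L * F s₀ := by
    intro s₀ h0 h1
    have heq1 : ∀ s' ∈ Set.uIcc (0:ℝ) s₀, arcLen L s' s₀ * Jr s' = (s₀ - s') * Jr s' := by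
      intro s' hs'
      rw [Set.uIcc_of_le h0, Set.mem_Icc] at hs'
      have hfr : Int.fract ((s₀ - s') / L) = (s₀ - s') / L := by
        rw [Int.fract_eq_self]
        constructor
        · apply div_nonneg (by linarith) hL.le
        · rw [div_lt_one hL]; linarith
      unfold arcLen
      rw [hfr, mul_div_cancel₀ _ hLne]
    have heq2 : ∀ s' ∈ Set.Ioc s₀ L, arcLen L s' s₀ * Jr s' = (s₀ - s' + L) * Jr s' := by
      intro s' hs'
      obtain ⟨ha, hb⟩ := hs'
      have hx : (s₀ - s') / L = (s₀ - s' + L) / L - (1:ℤ) := by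
        push_cast; field_simp; ring
      have hfr : Int.fract ((s₀ - s') / L) = (s₀ - s' + L) / L := by
        rw [hx, Int.fract_sub_intCast, Int.fract_eq_self]
        constructor
        · apply div_nonneg (by linarith) hL.le
        · rw [div_lt_one hL]; linarith
      unfold arcLen
      rw [hfr, mul_div_cancel₀ _ hLne]
    -- integrability of the arcLen integrand on each piece
    have c1 : Continuous (fun s' : ℝ => (s₀ - s') * Jr s') := by fun_prop
    have c2 : Continuous (fun s' : ℝ => (s₀ - s' + L) * Jr s') := by fun_prop
    have int1 : IntervalIntegrable (fun s' => arcLen L s' s₀ * Jr s') volume 0 s₀ := by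
      refine (c1.intervalIntegrable 0 s₀).congr ?_
      refine fun x hx => ?_
      exact (heq1 x (Set.uIoc_subset_uIcc hx)).symm
    have int2 : IntervalIntegrable (fun s' => arcLen L s' s₀ * Jr s') volume s₀ L := by
      refine (c2.intervalIntegrable s₀ L).congr ?_
      refine fun x hx => ?_
      rw [Set.uIoc_of_le h1.le] at hx
      exact (heq2 x hx).symm
    have hsplit := intervalIntegral.integral_add_adjacent_intervals int1 int2
    rw [← hsplit]
    have e1 : (∫ s' in (0:ℝ)..s₀, arcLen L s' s₀ * Jr s')
        = ∫ s' in (0:ℝ)..s₀, (s₀ - s') * Jr s' := intervalIntegral.integral_congr heq1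
    have e2 : (∫ s' in s₀..L, arcLen L s' s₀ * Jr s')
        = ∫ s' in s₀..L, (s₀ - s' + L) * Jr s' := by
      refine intervalIntegral.integral_congr_ae (Filter.Eventually.of_forall fun x hx => ?_)
      rw [Set.uIoc_of_le h1.le] at hx
      exact heq2 x hx
    rw [e1, e2]
    -- compute the two pieces
    have i1 : IntervalIntegrable (fun s' => (s₀ - s') * Jr s') volume 0 s₀ :=
      c1.intervalIntegrable _ _
    have i2 : IntervalIntegrable (fun s' => (s₀ - s') * Jr s') volume s₀ L :=
      c1.intervalIntegrable _ _
    have e3 : (∫ s' in s₀..L, (s₀ - s' + L) * Jr s')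
        = (∫ s' in s₀..L, (s₀ - s') * Jr s') + L * ∫ s' in s₀..L, Jr s' := by
      rw [← intervalIntegral.integral_const_mul,
        ← intervalIntegral.integral_add (g := fun x => L * Jr x) i2
          ((continuous_const.mul hJcont).intervalIntegrable _ _)]
      congr 1; funext x; ring
    have e4 : (∫ s' in s₀..L, Jr s') = - F s₀ := by
      have h4 : (∫ u in (0:ℝ)..s₀, Jr u) + (∫ u in s₀..L, Jr u) = ∫ u in (0:ℝ)..L, Jr u :=
        intervalIntegral.integral_add_adjacent_intervals
          (hJcont.intervalIntegrable 0 s₀) (hJcont.intervalIntegrable s₀ L)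
      rw [hJzero] at h4
      simp only [hFdef]
      linarith
    have e5 : (∫ s' in (0:ℝ)..s₀, (s₀ - s') * Jr s') + (∫ s' in s₀..L, (s₀ - s') * Jr s')
        = ∫ s' in (0:ℝ)..L, (s₀ - s') * Jr s' :=
      intervalIntegral.integral_add_adjacent_intervals i1 i2
    have e6 : (∫ s' in (0:ℝ)..L, (s₀ - s') * Jr s') = - ∫ s' in (0:ℝ)..L, s' * Jr s' := by
      have hsub : (∫ s' in (0:ℝ)..L, (s₀ - s') * Jr s')
          = (∫ s' in (0:ℝ)..L, s₀ * Jr s') - ∫ s' in (0:ℝ)..L, s' * Jr s' := by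
        have := intervalIntegral.integral_sub
          (μ := volume) (f := fun s' => s₀ * Jr s') (g := fun s' => s' * Jr s') (a := (0:ℝ)) (b := L)
          ((continuous_const.mul hJcont).intervalIntegrable _ _)
          ((continuous_id.mul hJcont).intervalIntegrable _ _)
        rw [← this]
        congr 1; funext x; ring
      rw [hsub, intervalIntegral.integral_const_mul, hJzero, mul_zero, zero_sub]
    rw [e3, e4]
    have : (∫ s' in (0:ℝ)..s₀, (s₀ - s') * Jr s') + (∫ s' in s₀..L, (s₀ - s') * Jr s')
        = - ∫ s' in (0:ℝ)..L, s' * Jr s' := by rw [e5, e6]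
    rw [hIBP]
    linarith
  -- key identity for all s, by periodicity
  have key : ∀ s : ℝ, (∫ s' in (0:ℝ)..L, arcLen L s' s * Jr s')
      = (∫ u in (0:ℝ)..L, F u) - L * F s := by
    intro s
    set n : ℤ := ⌊s / L⌋ with hn
    set s₀ : ℝ := s - n * L with hs₀
    have hfr : s₀ = L * Int.fract (s / L) := by
      rw [Int.fract]
      field_simp [hs₀]
      ring
    have h0 : 0 ≤ s₀ := by rw [hfr]; exact mul_nonneg hL.le (Int.fract_nonneg _)
    have h1 : s₀ < L := by
      rw [hfr]
      calc L * Int.fract (s / L) < L * 1 := by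
            exact mul_lt_mul_of_pos_left (Int.fract_lt_one _) hL
        _ = L := mul_one L
    have harc : ∀ s', arcLen L s' s = arcLen L s' s₀ := by
      intro s'
      unfold arcLen
      have hx : (s - s') / L = (s₀ - s') / L + (n:ℤ) := by
        push_cast
        rw [hs₀]
        field_simp
        ring
      rw [hx, Int.fract_add_intCast]
    have hFs : F s₀ = F s := hFper.sub_int_mul_eq n
    rw [← hFs, ← key0 s₀ h0 h1]
    exact intervalIntegral.integral_congr fun x _ => by rw [harc x]
  -- B in terms of F
  have hB0 : ∀ τ σ, B τ σ = B τ 0 + F σ / kap ^ 2 := by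
    intro τ σ
    have hg : ∀ x : ℝ, HasDerivAt (fun y => B τ y - F y / kap ^ 2) 0 x := by
      intro x
      have := (hBs τ x).sub ((hFderiv x).div_const (kap ^ 2))
      rw [sub_self] at this
      exact this
    have hc := is_const_of_deriv_eq_zero (𝕜 := ℝ)
      (fun x => (hg x).differentiableAt) (fun x => (hg x).deriv) σ 0
    simp only [hF0, zero_div, sub_zero] at hc
    linarith
  have hB0val : ∀ τ, B τ 0 = hr - (1 / L) * (∫ u in (0:ℝ)..L, F u) / kap ^ 2 := by
    intro τ
    have havg := hBavg τ
    have hInt : (∫ σ in (0:ℝ)..L, B τ σ)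
        = L * B τ 0 + (∫ u in (0:ℝ)..L, F u) / kap ^ 2 := by
      have : (∫ σ in (0:ℝ)..L, B τ σ)
          = ∫ σ in (0:ℝ)..L, (B τ 0 + F σ / kap ^ 2) :=
        intervalIntegral.integral_congr fun σ _ => hB0 τ σ
      rw [this, intervalIntegral.integral_add intervalIntegrable_const
        ((hFcont.div_const _).intervalIntegrable _ _),
        intervalIntegral.integral_const, intervalIntegral.integral_div]
      simp [mul_comm]
    rw [hInt] at havg
    field_simp at havg ⊢
    linarith
  intro t t' s
  constructor
  · rw [hB0 t s, hB0 t' s, hB0val t, hB0val t']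
  · rw [hB0 t s, hB0val t, key s]
    field_simp
    ring
end
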